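/- Let X be a metric space which is hereditarily Baire and Y a metric space. If f : X → Y is barely continuous (every restriction to a nonempty closed set has a continuity point), then for every ε > 0 there exists a function δ : X → ℝ with δ(x) > 0 such that dist(x,y) < min(δ(x), δ(y)) implies dist(f(x), f(y)) < ε for all x, y ∈ X. -/

import Mathlib

open Set

universe u v

/-- The ε-oscillation derivative of a set `F` with respect to `f`. -/
def myDrv {X : Type u} {Y : Type v} [MetricSpace X] [MetricSpace Y]
    (f : X → Y) (ε : ℝ) (F : Set X) : Set X :=
  {x | ∀ r > (0 : ℝ), ∃ y ∈ F ∩ Metric.ball x r, ∃ z ∈ F ∩ Metric.ball x r,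
    ε ≤ dist (f y) (f z)}

theorem myDrv_isClosed {X : Type u} {Y : Type v} [MetricSpace X] [MetricSpace Y]
    (f : X → Y) (ε : ℝ) (F : Set X) : IsClosed (myDrv f ε F) := by
  rw [← isOpen_compl_iff, isOpen_iff_mem_nhds]
  intro x hx
  simp only [mem_compl_iff, myDrv, mem_setOf_eq] at hx
  push_neg at hx
  obtain ⟨r, hr0, hx⟩ := hx
  rw [Metric.mem_nhds_iff]
  refine ⟨r / 2, by linarith, fun x' hx' => ?_⟩
  simp only [mem_compl_iff, myDrv, mem_setOf_eq]
  push_neg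
  refine ⟨r / 2, by linarith, fun y hy z hz => ?_⟩
  have hxx' : dist x' x < r / 2 := hx'
  have hy' : y ∈ F ∩ Metric.ball x r := by
    refine ⟨hy.1, ?_⟩
    have := hy.2
    rw [Metric.mem_ball] at this ⊢
    have : dist y x ≤ dist y x' + dist x' x := dist_triangle _ _ _
    linarith [show dist y x' < r/2 from hy.2, hxx']
  have hz' : z ∈ F ∩ Metric.ball x r := by
    refine ⟨hz.1, ?_⟩
    rw [Metric.mem_ball]
    have : dist z x ≤ dist z x' + dist x' x := dist_triangle _ _ _
    linarith [show dist z x' < r/2 from hz.2, hxx']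
  exact hx y hy' z hz'

theorem myDrv_subset_closure {X : Type u} {Y : Type v} [MetricSpace X] [MetricSpace Y]
    (f : X → Y) (ε : ℝ) (F : Set X) : myDrv f ε F ⊆ closure F := by
  intro x hx
  rw [Metric.mem_closure_iff]
  intro r hr
  obtain ⟨y, hy, -⟩ := hx r hr
  exact ⟨y, hy.1, by simpa [dist_comm] using hy.2⟩

/-- If `F` is closed and nonempty and `f` restricted to any closed set has a continuity
point, then the derivative is a proper subset. -/
theorem myDrv_ne {X : Type u} {Y : Type v} [MetricSpace X] [MetricSpace Y]
    {f : X → Y}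
    (hbc : ∀ F : Set X, IsClosed F → F.Nonempty → ∃ x ∈ F, ContinuousWithinAt f F x)
    {ε : ℝ} (hε : 0 < ε) {F : Set X} (hF : IsClosed F) (hne : F.Nonempty) :
    ∃ x ∈ F, x ∉ myDrv f ε F := by
  obtain ⟨x, hxF, hcont⟩ := hbc F hF hne
  refine ⟨x, hxF, fun hx => ?_⟩
  have := Metric.continuousWithinAt_iff.1 hcont (ε / 2) (by linarith)
  obtain ⟨r, hr, hball⟩ := this
  obtain ⟨y, hy, z, hz, hd⟩ := hx r hr
  have hy' : dist (f y) (f x) < ε / 2 := hball hy.1 (by simpa using hy.2)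
  have hz' : dist (f z) (f x) < ε / 2 := hball hz.1 (by simpa using hz.2)
  have : dist (f y) (f z) ≤ dist (f y) (f x) + dist (f x) (f z) := dist_triangle _ _ _
  rw [dist_comm (f x) (f z)] at this
  linarith

/-- Transfinite iteration of the derivative. -/
noncomputable def myG {X : Type u} {Y : Type v} [MetricSpace X] [MetricSpace Y]
    (f : X → Y) (ε : ℝ) : Ordinal.{u} → Set X
  | α => myDrv f ε (⋂ β : Iio α, myG f ε β.1)
termination_by α => α
decreasing_by exact β.2

theorem myG_def {X : Type u} {Y : Type v} [MetricSpace X] [MetricSpace Y]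
    (f : X → Y) (ε : ℝ) (α : Ordinal.{u}) :
    myG f ε α = myDrv f ε (⋂ β : Iio α, myG f ε β.1) := by
  rw [myG]

theorem myG_inter_closed {X : Type u} {Y : Type v} [MetricSpace X] [MetricSpace Y]
    (f : X → Y) (ε : ℝ) (α : Ordinal.{u}) :
    IsClosed (⋂ β : Iio α, myG f ε β.1) := by
  refine isClosed_iInter fun β => ?_
  rw [myG_def]
  exact myDrv_isClosed f ε _

theorem myG_subset_inter {X : Type u} {Y : Type v} [MetricSpace X] [MetricSpace Y]
    (f : X → Y) (ε : ℝ) (α : Ordinal.{u}) :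
    myG f ε α ⊆ ⋂ β : Iio α, myG f ε β.1 := by
  rw [myG_def]
  have h := myDrv_subset_closure f ε (⋂ β : Iio α, myG f ε β.1)
  rwa [(myG_inter_closed f ε α).closure_eq] at h

theorem myG_antitone {X : Type u} {Y : Type v} [MetricSpace X] [MetricSpace Y]
    (f : X → Y) (ε : ℝ) {β α : Ordinal.{u}} (h : β < α) :
    myG f ε α ⊆ myG f ε β := by
  intro x hx
  have := myG_subset_inter f ε α hx
  exact mem_iInter.1 this ⟨β, h⟩

theorem myG_inter_eq {X : Type u} {Y : Type v} [MetricSpace X] [MetricSpace Y]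
    (f : X → Y) (ε : ℝ) (β : Ordinal.{u}) :
    (⋂ γ : Iio (Order.succ β), myG f ε γ.1) = myG f ε β := by
  apply subset_antisymm
  · intro x hx
    exact mem_iInter.1 hx ⟨β, Order.lt_succ β⟩
  · intro x hx
    refine mem_iInter.2 fun γ => ?_
    have hle : γ.1 ≤ β := Order.le_of_lt_succ γ.2
    rcases eq_or_lt_of_le hle with h | h
    · rwa [h]
    · exact myG_antitone f ε h hx

/-- Eventually the iteration reaches the empty set. -/
theorem myG_eventually_empty {X : Type u} {Y : Type v} [MetricSpace X] [MetricSpace Y]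
    {f : X → Y}
    (hbc : ∀ F : Set X, IsClosed F → F.Nonempty → ∃ x ∈ F, ContinuousWithinAt f F x)
    {ε : ℝ} (hε : 0 < ε) : ∃ α : Ordinal.{u}, myG f ε α = ∅ := by
  by_contra h
  push_neg at h
  have key : ∀ β : Ordinal.{u}, myG f ε (Order.succ β) ⊂ myG f ε β := by
    intro β
    have heq : myG f ε (Order.succ β) = myDrv f ε (myG f ε β) := by
      rw [myG_def, myG_inter_eq]
    have hcl : IsClosed (myG f ε β) := by
      rw [myG_def]; exact myDrv_isClosed f ε _
    obtain ⟨x, hxF, hx⟩ := myDrv_ne hbc hε hcl (h β)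
    refine ⟨myG_antitone f ε (Order.lt_succ β), fun hsub => hx ?_⟩
    have := hsub hxF
    rwa [heq] at this
  have hinj : Function.Injective (myG f ε) := by
    intro β α hba
    by_contra hne
    rcases lt_or_gt_of_ne hne with hlt | hlt
    · have h1 : myG f ε α ⊆ myG f ε (Order.succ β) := by
        rcases eq_or_lt_of_le (Order.succ_le_of_lt hlt) with he | hl
        · rw [← he]
        · exact myG_antitone f ε hl
      exact (key β).2 (hba ▸ h1)
    · have h1 : myG f ε β ⊆ myG f ε (Order.succ α) := by
        rcases eq_or_lt_of_le (Order.succ_le_of_lt hlt) with he | hl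
        · rw [← he]
        · exact myG_antitone f ε hl
      exact (key α).2 (hba ▸ h1)
  exact not_injective_of_ordinal (myG f ε) hinj

theorem stmt13 {X Y : Type*} [MetricSpace X] [MetricSpace Y]
    (hered : ∀ F : Set X, IsClosed F → BaireSpace F) (f : X → Y)
    (hbc : ∀ F : Set X, IsClosed F → F.Nonempty → ∃ x ∈ F, ContinuousWithinAt f F x) :
    ∀ ε > (0 : ℝ), ∃ δ : X → ℝ, (∀ x, δ x > 0) ∧
      ∀ x y, dist x y < min (δ x) (δ y) → dist (f x) (f y) < ε := by
  intro ε hε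
  obtain ⟨α₁, hα₁⟩ := myG_eventually_empty hbc hε
  -- the rank of a point: least ordinal α with x ∉ myG f ε α
  have hSne : ∀ x : X, ({α : Ordinal | x ∉ myG f ε α}).Nonempty := fun x =>
    ⟨α₁, by simp [hα₁]⟩
  let rank : X → Ordinal := fun x => Ordinal.lt_wf.min _ (hSne x)
  have hrank_not_mem : ∀ x, x ∉ myG f ε (rank x) := fun x =>
    Ordinal.lt_wf.min_mem _ (hSne x)
  have hrank_mem : ∀ x, ∀ β < rank x, x ∈ myG f ε β := by
    intro x β hβ
    by_contra hx
    exact Ordinal.lt_wf.not_lt_min _ hx hβ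
  -- extract good radii
  have hrad : ∀ x : X, ∃ r > (0 : ℝ),
      ∀ y ∈ (⋂ β : Iio (rank x), myG f ε β.1) ∩ Metric.ball x r,
      ∀ z ∈ (⋂ β : Iio (rank x), myG f ε β.1) ∩ Metric.ball x r,
        dist (f y) (f z) < ε := by
    intro x
    have hx := hrank_not_mem x
    rw [myG_def] at hx
    simp only [myDrv, mem_setOf_eq, not_forall] at hx
    push_neg at hx
    obtain ⟨r, hr0, hrr⟩ := hx
    exact ⟨r, hr0, hrr⟩
  choose r hr0 hr using hrad
  refine ⟨r, hr0, ?_⟩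
  have key : ∀ x y, rank x ≤ rank y → dist x y < r x → dist (f x) (f y) < ε := by
    intro x y hxy hd
    have hxF : x ∈ ⋂ β : Iio (rank x), myG f ε β.1 :=
      mem_iInter.2 fun β => hrank_mem x β.1 β.2
    have hyF : y ∈ ⋂ β : Iio (rank x), myG f ε β.1 :=
      mem_iInter.2 fun β => hrank_mem y β.1 (lt_of_lt_of_le β.2 hxy)
    exact hr x x ⟨hxF, Metric.mem_ball_self (hr0 x)⟩ y
      ⟨hyF, by rw [Metric.mem_ball, dist_comm]; exact hd⟩
  intro x y hd
  rcases le_total (rank x) (rank y) with h | h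
  · exact key x y h (lt_of_lt_of_le hd (min_le_left _ _))
  · rw [dist_comm]
    exact key y x h (by rw [dist_comm]; exact lt_of_lt_of_le hd (min_le_right _ _))
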